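/- arXiv:0906.3405 — 2 statements merged into one kernel-verified Lean document; each statement's English description precedes it below -/
import Mathlib

section
/- Let n ≥ 1 and let A, X : ℤ × ℤ → ℚ be functions such that A(i,j) = X(i,j) + A(i,j+1) − A(i+1,j+1) holds for all 1 ≤ i < j ≤ n, and such that A(i, n+1) = 0 for all i and A(i',j') = 0 whenever i' ≥ j'. Then for all 1 ≤ i < j ≤ n, A(i,j) = ∑_{p=0}^{n-j} ∑_{q=0}^{p} (−1)^q · C(p,q) · X(i+q, j+p). -/
open Finset in
lemma inner_step (p : ℕ) (g : ℕ → ℚ) :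
    ∑ q ∈ Finset.range (p+2), (-1:ℚ)^q * ((p+1).choose q : ℚ) * g q
      = ∑ q ∈ Finset.range (p+1), (-1:ℚ)^q * (p.choose q : ℚ) * (g q - g (q+1)) := by
  have hA : ∑ q ∈ Finset.range (p+2), (-1:ℚ)^q * ((p+1).choose q : ℚ) * g q
      = (∑ q ∈ Finset.range (p+1), -((-1:ℚ)^q * (p.choose q : ℚ) * g (q+1))
        + ∑ q ∈ Finset.range (p+1), -((-1:ℚ)^q * (p.choose (q+1) : ℚ) * g (q+1))) + g 0 := by
    rw [Finset.sum_range_succ' _ (p+1)]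
    congr 1
    · rw [← Finset.sum_add_distrib]
      refine Finset.sum_congr rfl fun q _ => ?_
      push_cast [Nat.choose_succ_succ]
      ring
    · simp
  have hB : ∑ q ∈ Finset.range (p+1), (-1:ℚ)^q * (p.choose q : ℚ) * g q
      = (∑ q ∈ Finset.range p, -((-1:ℚ)^q * (p.choose (q+1) : ℚ) * g (q+1))) + g 0 := by
    rw [Finset.sum_range_succ' _ p]
    congr 1
    · refine Finset.sum_congr rfl fun q _ => ?_
      ring
    · simp
  have hC : ∑ q ∈ Finset.range (p+1), -((-1:ℚ)^q * (p.choose (q+1) : ℚ) * g (q+1))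
      = ∑ q ∈ Finset.range p, -((-1:ℚ)^q * (p.choose (q+1) : ℚ) * g (q+1)) := by
    rw [Finset.sum_range_succ]
    simp
  have hR : ∑ q ∈ Finset.range (p+1), (-1:ℚ)^q * (p.choose q : ℚ) * (g q - g (q+1))
      = ∑ q ∈ Finset.range (p+1), (-1:ℚ)^q * (p.choose q : ℚ) * g q
        - ∑ q ∈ Finset.range (p+1), (-1:ℚ)^q * (p.choose q : ℚ) * g (q+1) := by
    rw [← Finset.sum_sub_distrib]
    exact Finset.sum_congr rfl fun q _ => by ring
  have hneg : ∑ q ∈ Finset.range (p+1), -((-1:ℚ)^q * (p.choose q : ℚ) * g (q+1))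
      = -∑ q ∈ Finset.range (p+1), (-1:ℚ)^q * (p.choose q : ℚ) * g (q+1) := by
    simp
  rw [hA, hC, hR, hB, hneg]
  ring

open Finset in
lemma outer_step (k : ℕ) (F : ℕ → ℕ → ℚ) :
    ∑ p ∈ Finset.range (k+2), ∑ q ∈ Finset.range (p+1),
        (-1:ℚ)^q * (p.choose q : ℚ) * F p q
      = F 0 0 + ∑ p ∈ Finset.range (k+1), ∑ q ∈ Finset.range (p+1),
        (-1:ℚ)^q * (p.choose q : ℚ) * (F (p+1) q - F (p+1) (q+1)) := by
  rw [Finset.sum_range_succ' _ (k+1)]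
  simp only [inner_step]
  simp [add_comm]

theorem recurrence_solution (n : ℤ) (hn : 1 ≤ n) (A X : ℤ × ℤ → ℚ)
    (hrec : ∀ i j : ℤ, 1 ≤ i → i < j → j ≤ n →
      A (i, j) = X (i, j) + A (i, j + 1) - A (i + 1, j + 1))
    (htop : ∀ i : ℤ, A (i, n + 1) = 0)
    (hzero : ∀ i j : ℤ, j ≤ i → A (i, j) = 0) :
    ∀ i j : ℤ, 1 ≤ i → i < j → j ≤ n →
      A (i, j) = ∑ p ∈ Finset.range ((n - j).toNat + 1), ∑ q ∈ Finset.range (p + 1),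
        (-1 : ℚ) ^ q * (p.choose q : ℚ) * X (i + q, j + p) := by
  suffices h : ∀ k : ℕ, ∀ i j : ℤ, 1 ≤ i → i < j → j ≤ n → n - j = (k : ℤ) →
      A (i, j) = ∑ p ∈ Finset.range (k + 1), ∑ q ∈ Finset.range (p + 1),
        (-1 : ℚ) ^ q * (p.choose q : ℚ) * X (i + q, j + p) by
    intro i j h1 h2 h3
    have hk : n - j = ((n - j).toNat : ℤ) := (Int.toNat_of_nonneg (by omega)).symm
    exact h _ i j h1 h2 h3 hk
  intro k
  induction k with
  | zero =>
    intro i j h1 h2 h3 hk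
    rw [hrec i j h1 h2 h3, show j + 1 = n + 1 by omega, htop, htop]
    simp
  | succ k ih =>
    intro i j h1 h2 h3 hk
    have hjn : j + 1 ≤ n := by omega
    have e1 : A (i, j + 1) = ∑ p ∈ Finset.range (k + 1), ∑ q ∈ Finset.range (p + 1),
        (-1 : ℚ) ^ q * (p.choose q : ℚ) * X (i + q, (j + 1) + p) :=
      ih i (j+1) h1 (by omega) hjn (by omega)
    have e2 : A (i + 1, j + 1) = ∑ p ∈ Finset.range (k + 1), ∑ q ∈ Finset.range (p + 1),
        (-1 : ℚ) ^ q * (p.choose q : ℚ) * X ((i + 1) + q, (j + 1) + p) :=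
      ih (i+1) (j+1) (by omega) (by omega) hjn (by omega)
    rw [hrec i j h1 h2 h3, e1, e2]
    rw [show k + 1 + 1 = k + 2 from rfl,
      outer_step k (fun p q => X (i + (q : ℤ), j + (p : ℤ)))]
    simp only [mul_sub, Finset.sum_sub_distrib]
    push_cast
    have c1 : ∀ p q : ℕ, X (i + (q:ℤ), j + 1 + (p:ℤ)) = X (i + (q:ℤ), j + ((p:ℤ) + 1)) := by
      intro p q
      rw [show (j + 1 + (p:ℤ)) = j + ((p:ℤ) + 1) by ring]
    have c2 : ∀ p q : ℕ, X (i + 1 + (q:ℤ), j + 1 + (p:ℤ)) = X (i + ((q:ℤ) + 1), j + ((p:ℤ) + 1)) := by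
      intro p q
      rw [show (i + 1 + (q:ℤ)) = i + ((q:ℤ) + 1) by ring,
        show (j + 1 + (p:ℤ)) = j + ((p:ℤ) + 1) by ring]
    simp only [c1, c2, add_zero]
    ring
end

section
/- Let X : ℤ × ℤ → ℚ be any function and define A(i,j) = ∑_{p=0}^{n−j} ∑_{q=0}^{p} (−1)^q C(p,q) X(i+q, j+p) for 1 ≤ i < j ≤ n (and A(i, n+1) := 0). Then A satisfies the recurrence X(i,j) = A(i+1,j+1) + A(i,j) − A(i,j+1) for all 1 ≤ i < j ≤ n, where A(i+1,j+1) is interpreted as 0 when i+1 = j+1 or j+1 = n+1 per the definition. -/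
lemma key_alt (p : ℕ) (h : ℕ → ℚ) :
    ∑ q ∈ Finset.range (p + 2), (-1 : ℚ) ^ q * ((p+1).choose q : ℚ) * h q
    = ∑ q ∈ Finset.range (p + 1), (-1 : ℚ) ^ q * (p.choose q : ℚ) * (h q - h (q + 1)) := by
  have T : ∑ q ∈ Finset.range (p+1), (-1:ℚ)^(q+1) * (p.choose (q+1) : ℚ) * h (q+1)
      = ∑ q ∈ Finset.range (p+1), (-1:ℚ)^q * (p.choose q : ℚ) * h q - h 0 := by
    have h1 := Finset.sum_range_succ' (fun q => (-1:ℚ)^q * (p.choose q : ℚ) * h q) (p+1)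
    have h2 := Finset.sum_range_succ (fun q => (-1:ℚ)^q * (p.choose q : ℚ) * h q) (p+1)
    rw [Nat.choose_succ_self] at h2
    simp only [Nat.cast_zero, mul_zero, zero_mul, add_zero, pow_zero, Nat.choose_zero_right,
      Nat.cast_one, one_mul] at h1 h2
    rw [h1] at h2
    linarith
  rw [Finset.sum_range_succ' _ (p+1)]
  have pascal : ∀ q ∈ Finset.range (p+1),
      (-1:ℚ)^(q+1) * (((p+1).choose (q+1) : ℕ) : ℚ) * h (q+1)
      = (-1:ℚ)^(q+1) * (p.choose q : ℚ) * h (q+1) + (-1:ℚ)^(q+1) * (p.choose (q+1) : ℚ) * h (q+1) := by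
    intro q _
    rw [Nat.choose_succ_succ]
    push_cast
    ring
  rw [Finset.sum_congr rfl pascal, Finset.sum_add_distrib, T]
  simp only [mul_sub, Finset.sum_sub_distrib]
  have : ∀ q ∈ Finset.range (p+1), (-1:ℚ)^(q+1) * (p.choose q : ℚ) * h (q+1)
      = -((-1:ℚ)^q * (p.choose q : ℚ) * h (q+1)) := by intro q _; ring
  rw [Finset.sum_congr rfl this, Finset.sum_neg_distrib]
  simp
  ring

theorem explicit_formula_satisfies_recurrence (n : ℤ) (hn : 1 ≤ n)
    (X : ℤ × ℤ → ℚ) (A : ℤ × ℤ → ℚ)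
    (hA : ∀ i j : ℤ, 1 ≤ i → i < j → j ≤ n →
      A (i, j) = ∑ p ∈ Finset.range ((n - j).toNat + 1), ∑ q ∈ Finset.range (p + 1),
        (-1 : ℚ) ^ q * (p.choose q : ℚ) * X (i + q, j + p))
    (hA0 : ∀ i j : ℤ, j ≤ i ∨ n < j → A (i, j) = 0) :
    ∀ i j : ℤ, 1 ≤ i → i < j → j ≤ n →
      X (i, j) = A (i + 1, j + 1) + A (i, j) - A (i, j + 1) := by
  intro i j hi hij hjn
  rcases eq_or_lt_of_le hjn with rfl | hlt
  · rw [hA0 (i+1) (j+1) (Or.inr (by linarith)), hA0 i (j+1) (Or.inr (by linarith)),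
      hA i j hi hij le_rfl]
    simp
  · have hk : (n - j).toNat = (n - (j+1)).toNat + 1 := by omega
    set k := (n - (j+1)).toNat with hkdef
    rw [hA i j hi hij hjn, hA i (j+1) hi (by linarith) (by linarith),
      hA (i+1) (j+1) (by linarith) (by linarith) (by linarith), hk]
    rw [Finset.sum_range_succ' (fun p => ∑ q ∈ Finset.range (p+1),
      (-1 : ℚ) ^ q * (p.choose q : ℚ) * X (i + q, j + p)) (k+1)]
    have f0 : ∑ q ∈ Finset.range (0+1), (-1:ℚ)^q * ((0:ℕ).choose q : ℚ) * X (i + q, j + (0:ℕ))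
        = X (i, j) := by simp
    rw [f0]
    have main : ∑ p ∈ Finset.range (k+1), ∑ q ∈ Finset.range (p+1+1),
        (-1:ℚ)^q * ((p+1).choose q : ℚ) * X (i + q, j + (p+1 : ℕ))
        = (∑ p ∈ Finset.range (k+1), ∑ q ∈ Finset.range (p+1),
            (-1:ℚ)^q * (p.choose q : ℚ) * X (i + q, j + 1 + p))
          - ∑ p ∈ Finset.range (k+1), ∑ q ∈ Finset.range (p+1),
            (-1:ℚ)^q * (p.choose q : ℚ) * X (i + 1 + q, j + 1 + p) := by
      rw [← Finset.sum_sub_distrib]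
      refine Finset.sum_congr rfl fun p _ => ?_
      rw [key_alt p (fun q => X (i + q, j + (p+1 : ℕ)))]
      rw [← Finset.sum_sub_distrib]
      refine Finset.sum_congr rfl fun q _ => ?_
      have e1 : (j : ℤ) + ((p:ℕ)+1 : ℕ) = j + 1 + p := by push_cast; ring
      have e2 : (i : ℤ) + ((q:ℕ)+1 : ℕ) = i + 1 + q := by push_cast; ring
      rw [e1, e2]
      ring
    rw [main]
    ring
end
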